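/- Let A be an abelian group and let Φ : P^n_o → A be a valuation (with the convention Φ(∅) = 0). Then Φ satisfies the inclusion-exclusion principle: for all m ∈ N and all P₁, …, P_m ∈ P^n_o with P₁ ∪ … ∪ P_m ∈ P^n_o, one has Φ(P₁ ∪ … ∪ P_m) = Σ_{∅ ≠ S ⊆ {1,…,m}} (−1)^{|S|−1} Φ(∩_{i∈S} P_i). -/

import Mathlib

open MeasureTheory Metric
open scoped RealInnerProductSpace Pointwise

noncomputable section

/-- Euclidean `n`-space. -/
abbrev Eucl (n : ℕ) : Type := EuclideanSpace ℝ (Fin n)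

/-- A convex body: a nonempty compact convex subset of `ℝⁿ`. -/
def IsConvexBody {n : ℕ} (K : Set (Eucl n)) : Prop :=
  K.Nonempty ∧ IsCompact K ∧ Convex ℝ K

/-- A convex body containing the origin. -/
def IsConvexBodyO {n : ℕ} (K : Set (Eucl n)) : Prop :=
  IsConvexBody K ∧ (0 : Eucl n) ∈ K

/-- A convex polytope: the convex hull of a finite nonempty set of points. -/
def IsPolytope {n : ℕ} (P : Set (Eucl n)) : Prop :=
  ∃ S : Finset (Eucl n), S.Nonempty ∧ P = convexHull ℝ (S : Set (Eucl n))

/-- A convex polytope containing the origin. -/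
def IsPolytopeO {n : ℕ} (P : Set (Eucl n)) : Prop :=
  IsPolytope P ∧ (0 : Eucl n) ∈ P

/-- The support function `h(K, u) = sup_{x ∈ K} ⟨x, u⟩`. -/
def suppFn {n : ℕ} (K : Set (Eucl n)) (u : Eucl n) : ℝ :=
  sSup ((fun x => ⟪x, u⟫) '' K)

/-- The dimension of a convex set: the dimension of its affine hull. -/
def setDim {n : ℕ} (P : Set (Eucl n)) : ℕ :=
  Module.finrank ℝ (affineSpan ℝ P).direction

/-- `h(I_p⁺ K, u)^p = max_{x ∈ K} ⟨x, u⟩₊^p`. -/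
def IppF {n : ℕ} (p : ℝ) (K : Set (Eucl n)) (u : Eucl n) : ℝ :=
  sSup ((fun x => (max ⟪x, u⟫ 0) ^ p) '' K)

/-- `h(I_p⁻ K, u)^p = max_{x ∈ K} ⟨x, u⟩₋^p`. -/
def ImpF {n : ℕ} (p : ℝ) (K : Set (Eucl n)) (u : Eucl n) : ℝ :=
  sSup ((fun x => (max (-⟪x, u⟫) 0) ^ p) '' K)

/-- `(J_p⁺ K)(u) = min_{x ∈ K} ⟨x, u⟩₊^p`. -/
def JppF {n : ℕ} (p : ℝ) (K : Set (Eucl n)) (u : Eucl n) : ℝ :=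
  sInf ((fun x => (max ⟪x, u⟫ 0) ^ p) '' K)

/-- `(J_p⁻ K)(u) = min_{x ∈ K} ⟨x, u⟩₋^p`. -/
def JmpF {n : ℕ} (p : ℝ) (K : Set (Eucl n)) (u : Eucl n) : ℝ :=
  sInf ((fun x => (max (-⟪x, u⟫) 0) ^ p) '' K)

/-- The face `F(K, v) = {x ∈ K : ⟨x, v⟩ = h(K, v)}`. -/
def face {n : ℕ} (K : Set (Eucl n)) (v : Eucl n) : Set (Eucl n) :=
  {x ∈ K | ⟪x, v⟫ = suppFn K v}

/-- `h(E_p⁺ K, u)^p = (1/2) Σ_{v ∈ S¹, h(K,v) = 0} max_{x ∈ F(K,v)} ⟨x, u⟩₊^p`. -/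
def EppF {n : ℕ} (p : ℝ) (K : Set (Eucl n)) (u : Eucl n) : ℝ :=
  (1 / 2) * ∑' v : {v : Eucl n // ‖v‖ = 1 ∧ suppFn K v = 0},
    sSup ((fun x => (max ⟪x, u⟫ 0) ^ p) '' face K v.1)

/-- `h(E_p⁻ K, u)^p = (1/2) Σ_{v ∈ S¹, h(K,v) = 0} max_{x ∈ F(K,v)} ⟨x, u⟩₋^p`. -/
def EmpF {n : ℕ} (p : ℝ) (K : Set (Eucl n)) (u : Eucl n) : ℝ :=
  (1 / 2) * ∑' v : {v : Eucl n // ‖v‖ = 1 ∧ suppFn K v = 0},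
    sSup ((fun x => (max (-⟪x, u⟫) 0) ^ p) '' face K v.1)

/-- `(F_p⁺ K)(u) = (1/2) Σ_{v ∈ S¹, h(K,v) = 0} min_{x ∈ F(K,v)} ⟨x, u⟩₊^p`. -/
def FppF {n : ℕ} (p : ℝ) (K : Set (Eucl n)) (u : Eucl n) : ℝ :=
  (1 / 2) * ∑' v : {v : Eucl n // ‖v‖ = 1 ∧ suppFn K v = 0},
    sInf ((fun x => (max ⟪x, u⟫ 0) ^ p) '' face K v.1)

/-- `(F_p⁻ K)(u) = (1/2) Σ_{v ∈ S¹, h(K,v) = 0} min_{x ∈ F(K,v)} ⟨x, u⟩₋^p`. -/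
def FmpF {n : ℕ} (p : ℝ) (K : Set (Eucl n)) (u : Eucl n) : ℝ :=
  (1 / 2) * ∑' v : {v : Eucl n // ‖v‖ = 1 ∧ suppFn K v = 0},
    sInf ((fun x => (max (-⟪x, u⟫) 0) ^ p) '' face K v.1)

/-- The maximum norm over the unit sphere. -/
def sphSup {n : ℕ} (f : Eucl n → ℝ) : ℝ :=
  ⨆ u : Metric.sphere (0 : Eucl n) 1, |f u.1|

/-- The standard simplex `Tⁿ = conv{o, e₁, …, e_n}`. -/
def stdT (n : ℕ) : Set (Eucl n) :=
  convexHull ℝ (insert (0 : Eucl n) (Set.range fun i : Fin n => EuclideanSpace.single i (1 : ℝ)))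

/-- The simplex `T̃ⁿ⁻¹ = conv{e₁, …, e_n}`. -/
def tilT (n : ℕ) : Set (Eucl n) :=
  convexHull ℝ (Set.range fun i : Fin n => EuclideanSpace.single i (1 : ℝ))



namespace IEval

variable {E : Type*} [NormedAddCommGroup E] [InnerProductSpace ℝ E]

/-- The H-polyhedron determined by a finite set of constraints. -/
def poly (R : Finset (E × ℝ)) : Set E := {x | ∀ p ∈ R, ⟪p.1, x⟫ ≤ p.2}

lemma mem_poly {R : Finset (E × ℝ)} {x : E} : x ∈ poly R ↔ ∀ p ∈ R, ⟪p.1, x⟫ ≤ p.2 := Iff.rfl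

lemma poly_union [DecidableEq (E × ℝ)] (R S : Finset (E × ℝ)) : poly (R ∪ S) = poly R ∩ poly S := by
  ext x
  simp only [mem_poly, Finset.mem_union, Set.mem_inter_iff]
  constructor
  · intro h; exact ⟨fun p hp => h p (Or.inl hp), fun p hp => h p (Or.inr hp)⟩
  · rintro ⟨h1, h2⟩ p (hp | hp)
    exacts [h1 p hp, h2 p hp]

lemma isClosed_poly (R : Finset (E × ℝ)) : IsClosed (poly R) := by
  have : poly R = ⋂ p ∈ R, {x : E | ⟪p.1, x⟫ ≤ p.2} := by
    ext x; simp [mem_poly]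
  rw [this]
  exact isClosed_biInter fun p _ => isClosed_le (innerSL ℝ p.1).continuous continuous_const

lemma convex_poly (R : Finset (E × ℝ)) : Convex ℝ (poly R) := by
  have : poly R = ⋂ p ∈ R, {x : E | ⟪p.1, x⟫ ≤ p.2} := by
    ext x; simp [mem_poly]
  rw [this]
  exact convex_iInter fun p => convex_iInter fun _ =>
    convex_halfSpace_le (innerSL ℝ p.1).toLinearMap.isLinear p.2

section FD
variable [FiniteDimensional ℝ E]

lemma extreme_key {R : Finset (E × ℝ)} {x : E} (hx : x ∈ (poly R).extremePoints ℝ)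
    {v : E} (hv : ∀ p ∈ R, ⟪p.1, x⟫ = p.2 → ⟪p.1, v⟫ = 0) : v = 0 := by
  by_contra hv0
  classical
  set J : Finset (E × ℝ) := R.filter (fun p => ⟪p.1, v⟫ ≠ 0) with hJ
  set ε : ℝ := if h : J.Nonempty then
      min 1 (J.inf' h (fun p => (p.2 - ⟪p.1, x⟫) / |⟪p.1, v⟫|)) else 1 with hε
  have hxP := hx.1
  have hεpos : 0 < ε := by
    rw [hε]
    split_ifs with h
    · refine lt_min one_pos ?_
      rw [Finset.lt_inf'_iff]
      intro p hp
      rw [hJ, Finset.mem_filter] at hp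
      have hlt : ⟪p.1, x⟫ < p.2 := by
        rcases lt_or_eq_of_le (hxP p hp.1) with h' | h'
        · exact h'
        · exact absurd (hv p hp.1 h') hp.2
      exact div_pos (by linarith) (abs_pos.2 hp.2)
    · exact one_pos
  have hmem : ∀ s : ℝ, |s| ≤ ε → x + s • v ∈ poly R := by
    intro s hs p hp
    by_cases hpv : ⟪p.1, v⟫ = 0
    · rw [inner_add_right, real_inner_smul_right, hpv]
      simpa using hxP p hp
    · have hpJ : p ∈ J := by rw [hJ, Finset.mem_filter]; exact ⟨hp, hpv⟩
      have hJne : J.Nonempty := ⟨p, hpJ⟩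
      have hεle : ε ≤ (p.2 - ⟪p.1, x⟫) / |⟪p.1, v⟫| := by
        rw [hε, dif_pos hJne]
        exact (min_le_right _ _).trans (by exact Finset.inf'_le _ hpJ)
      have habs : |s * ⟪p.1, v⟫| ≤ p.2 - ⟪p.1, x⟫ := by
        rw [abs_mul]
        calc |s| * |⟪p.1, v⟫| ≤ ε * |⟪p.1, v⟫| := by
              exact mul_le_mul_of_nonneg_right hs (abs_nonneg _)
          _ ≤ ((p.2 - ⟪p.1, x⟫) / |⟪p.1, v⟫|) * |⟪p.1, v⟫| := by
              exact mul_le_mul_of_nonneg_right hεle (abs_nonneg _)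
          _ = p.2 - ⟪p.1, x⟫ := by
              field_simp
      rw [inner_add_right, real_inner_smul_right]
      have := le_abs_self (s * ⟪p.1, v⟫)
      linarith [this, habs]
  have h1 : x + ε • v ∈ poly R := hmem ε (by rw [abs_of_pos hεpos])
  have h2 : x - ε • v ∈ poly R := by
    have := hmem (-ε) (by rw [abs_neg, abs_of_pos hεpos])
    rwa [neg_smul, ← sub_eq_add_neg] at this
  have hseg : x ∈ openSegment ℝ (x - ε • v) (x + ε • v) := by
    refine ⟨1/2, 1/2, by norm_num, by norm_num, by norm_num, ?_⟩
    module
  have := hx.2 h2 h1 hseg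
  have hεv : ε • v = 0 := by
    have : x - ε • v = x := this
    linear_combination (norm := module) -this
  exact hv0 (by simpa [smul_eq_zero, ne_of_gt hεpos] using hεv)

lemma poly_extremePoints_finite (R : Finset (E × ℝ)) : ((poly R).extremePoints ℝ).Finite := by
  classical
  have himfin : ((fun x => R.filter (fun p => ⟪p.1, x⟫ = p.2)) '' ((poly R).extremePoints ℝ)).Finite := by
    apply Set.Finite.subset (R.powerset : Finset (Finset (E × ℝ))).finite_toSet
    rintro T ⟨x, _, rfl⟩
    exact Finset.mem_coe.2 (Finset.mem_powerset.2 (Finset.filter_subset _ _))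
  refine Set.Finite.of_finite_image himfin ?_
  intro x hx y hy hxy
  have hsub : y - x = 0 := by
    apply extreme_key hx
    intro p hp hpx
    have hpy : ⟪p.1, y⟫ = p.2 := by
      have : p ∈ R.filter (fun p => ⟪p.1, x⟫ = p.2) := Finset.mem_filter.2 ⟨hp, hpx⟩
      simp only at hxy
      rw [hxy] at this
      exact (Finset.mem_filter.1 this).2
    rw [inner_sub_right, hpx, hpy, sub_self]
  exact (sub_eq_zero.1 hsub).symm


lemma poly_eq_convexHull {R : Finset (E × ℝ)} (hc : IsCompact (poly R))
    (hne : (poly R).Nonempty) :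
    ∃ V : Finset E, V.Nonempty ∧ poly R = convexHull ℝ (V : Set E) := by
  classical
  have hfin := poly_extremePoints_finite R
  have hKM := closure_convexHull_extremePoints hc (convex_poly R)
  have hclosed : IsClosed (convexHull ℝ ((poly R).extremePoints ℝ)) :=
    (hfin.isCompact_convexHull ℝ).isClosed
  have heq : convexHull ℝ ((poly R).extremePoints ℝ) = poly R := by
    rw [← hclosed.closure_eq]; exact hKM
  refine ⟨hfin.toFinset, ?_, ?_⟩
  · rw [Set.Finite.toFinset_nonempty hfin]
    by_contra h
    rw [Set.not_nonempty_iff_eq_empty] at h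
    rw [h, convexHull_empty] at heq
    exact hne.ne_empty heq.symm
  · rw [Set.Finite.coe_toFinset, heq]


/-- Polar-duality step: if `0` is interior to the hull, get an H-representation. -/
lemma rep_of_zero_interior (V : Finset E)
    (h0 : (0 : E) ∈ interior (convexHull ℝ (V : Set E))) :
    ∃ R : Finset (E × ℝ), convexHull ℝ (V : Set E) = poly R := by
  classical
  set Q : Set E := convexHull ℝ (V : Set E) with hQ
  have hQconv : Convex ℝ Q := convex_convexHull ℝ _
  have hQcomp : IsCompact Q := (V.finite_toSet.isCompact_convexHull ℝ)
  have hQclosed : IsClosed Q := hQcomp.isClosed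
  have h0Q : (0 : E) ∈ Q := interior_subset h0
  set D : Set E := poly (V.image (fun v => (v, (1:ℝ)))) with hD
  have memD : ∀ y : E, y ∈ D ↔ ∀ v ∈ V, ⟪v, y⟫ ≤ 1 := by
    intro y
    constructor
    · intro hy v hv
      exact hy (v, 1) (Finset.mem_image.2 ⟨v, hv, rfl⟩)
    · rintro h p hp
      obtain ⟨v, hv, rfl⟩ := Finset.mem_image.1 hp
      exact h v hv
  have hDQ : ∀ y ∈ D, ∀ x ∈ Q, ⟪x, y⟫ ≤ 1 := by
    intro y hy
    have : (V : Set E) ⊆ {x : E | ⟪x, y⟫ ≤ 1} := fun v hv => (memD y).1 hy v hv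
    intro x hx
    have h2 : (V : Set E) ⊆ {x : E | ⟪y, x⟫ ≤ 1} := by
      intro v hv; rw [Set.mem_setOf_eq, real_inner_comm]; exact this hv
    have := convexHull_min h2
      (convex_halfSpace_le (innerSL ℝ y).toLinearMap.isLinear 1) hx
    rwa [Set.mem_setOf_eq, real_inner_comm] at this
  -- D is compact
  obtain ⟨r, hr, hball⟩ := Metric.mem_nhds_iff.1 (mem_interior_iff_mem_nhds.1 h0)
  have hDsub : D ⊆ Metric.closedBall (0 : E) (2 / r) := by
    intro y hy
    rcases eq_or_ne y 0 with rfl | hy0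
    · simp [Metric.mem_closedBall]; positivity
    · have hnorm : ‖y‖ ≠ 0 := norm_ne_zero_iff.2 hy0
      set x : E := (r / (2 * ‖y‖)) • y with hx
      have hy' : 0 < ‖y‖ := lt_of_le_of_ne (norm_nonneg y) (Ne.symm hnorm)
      have hxball : x ∈ Metric.ball (0 : E) r := by
        rw [Metric.mem_ball, dist_zero_right, hx, norm_smul]
        rw [Real.norm_eq_abs, abs_of_pos (by positivity)]
        have h2 : (r / (2 * ‖y‖)) * ‖y‖ = r / 2 := by
          field_simp
        rw [h2]
        linarith
      have hxQ : x ∈ Q := hball hxball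
      have := hDQ y hy x hxQ
      rw [hx, real_inner_smul_left, real_inner_self_eq_norm_sq] at this
      have h2 : (r / (2 * ‖y‖)) * ‖y‖^2 = r * ‖y‖ / 2 := by
        field_simp
      rw [h2] at this
      rw [Metric.mem_closedBall, dist_zero_right]
      rw [le_div_iff₀ hr]
      nlinarith [norm_nonneg y]
  have hDcomp : IsCompact D :=
    IsCompact.of_isClosed_subset (isCompact_closedBall 0 (2/r)) (isClosed_poly _) hDsub
  have hDne : D.Nonempty := ⟨0, by rw [memD]; intro v hv; simp⟩
  obtain ⟨W, hWne, hWeq⟩ := poly_eq_convexHull (R := V.image (fun v => (v,(1:ℝ)))) hDcomp hDne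
  refine ⟨W.image (fun w => (w, (1:ℝ))), ?_⟩
  apply Set.eq_of_subset_of_subset
  · intro x hx p hp
    obtain ⟨w, hw, rfl⟩ := Finset.mem_image.1 hp
    have hwD : w ∈ D := by rw [hD, hWeq]; exact subset_convexHull ℝ _ hw
    have := hDQ w hwD x hx
    rwa [real_inner_comm] at this
  · intro x hx
    by_contra hxQ
    obtain ⟨f, u, hsep, hux⟩ := geometric_hahn_banach_closed_point hQconv hQclosed hxQ
    have hu : 0 < u := by simpa using hsep 0 h0Q
    set y : E := u⁻¹ • (InnerProductSpace.toDual ℝ E).symm f with hy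
    have hyz : ∀ z : E, ⟪y, z⟫ = u⁻¹ * f z := by
      intro z
      rw [hy, real_inner_smul_left, InnerProductSpace.toDual_symm_apply]
    have hyD : y ∈ D := by
      rw [memD]
      intro v hv
      rw [real_inner_comm, hyz]
      have : f v < u := hsep v (subset_convexHull ℝ _ hv)
      rw [inv_mul_le_iff₀ hu]
      linarith
    have hyW : y ∈ convexHull ℝ (W : Set E) := by rw [← hWeq]; exact hyD
    have hle : ⟪y, x⟫ ≤ 1 := by
      have hWsub : (W : Set E) ⊆ {z : E | ⟪x, z⟫ ≤ 1} := by
        intro w hw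
        have := hx (w, 1) (Finset.mem_image.2 ⟨w, hw, rfl⟩)
        rwa [Set.mem_setOf_eq, real_inner_comm]
      have := convexHull_min hWsub (convex_halfSpace_le (innerSL ℝ x).toLinearMap.isLinear 1) hyW
      rwa [Set.mem_setOf_eq, real_inner_comm] at this
    rw [hyz] at hle
    rw [inv_mul_le_iff₀ hu] at hle
    linarith


lemma poly_neg_one : poly ({((0:E), (-1:ℝ))} : Finset (E × ℝ)) = (∅ : Set E) := by
  ext x
  simp [mem_poly]

lemma rep_of_empty : ∃ R : Finset (E × ℝ), convexHull ℝ ((∅ : Finset E) : Set E) = poly R := by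
  refine ⟨{((0:E), (-1:ℝ))}, ?_⟩
  rw [poly_neg_one]
  simp

lemma hull_image_sub [DecidableEq E] (V : Finset E) (c : E) :
    convexHull ℝ ((V.image (fun v => v - c) : Finset E) : Set E)
      = (fun v => v - c) '' convexHull ℝ (V : Set E) := by
  classical
  rw [Finset.coe_image]
  have : (fun v : E => v - c) = ((AffineEquiv.constVAdd ℝ E (-c) : E ≃ᵃ[ℝ] E) : E → E) := by
    funext v
    simp [AffineEquiv.constVAdd_apply, sub_eq_neg_add]
  rw [this]
  exact ((AffineEquiv.constVAdd ℝ E (-c)).toAffineMap.image_convexHull (V : Set E)).symm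

lemma rep_translate [DecidableEq E] (c : E) (V : Finset E)
    (h : ∃ R : Finset (E × ℝ),
      convexHull ℝ ((V.image (fun v => v - c) : Finset E) : Set E) = poly R) :
    ∃ R : Finset (E × ℝ), convexHull ℝ (V : Set E) = poly R := by
  classical
  obtain ⟨R, hR⟩ := h
  rw [hull_image_sub] at hR
  refine ⟨R.image (fun p => (p.1, p.2 + ⟪p.1, c⟫)), ?_⟩
  ext x
  constructor
  · intro hx p hp
    obtain ⟨q, hq, rfl⟩ := Finset.mem_image.1 hp
    have : x - c ∈ poly R := by
      rw [← hR]; exact ⟨x, hx, rfl⟩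
    have := this q hq
    rw [inner_sub_right] at this
    simp only
    linarith
  · intro hx
    have hxc : x - c ∈ poly R := by
      intro q hq
      have := hx (q.1, q.2 + ⟪q.1, c⟫) (Finset.mem_image.2 ⟨q, hq, rfl⟩)
      simp only at this
      rw [inner_sub_right]
      linarith
    rw [← hR] at hxc
    obtain ⟨y, hy, hyx⟩ := hxc
    have hyx' : y = x := by
      have h2 : y - c = x - c := hyx
      have h3 := congrArg (· + c) h2
      simpa using h3
    rwa [← hyx']

lemma rep_subspace (W : Submodule ℝ E) (V : Finset E) (hVW : ∀ v ∈ V, v ∈ W)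
    (h : ∀ V' : Finset W, ∃ R' : Finset (W × ℝ), convexHull ℝ (V' : Set W) = poly R') :
    ∃ R : Finset (E × ℝ), convexHull ℝ (V : Set E) = poly R := by
  classical
  set V' : Finset W := V.attach.image (fun v => (⟨v.1, hVW v.1 v.2⟩ : W)) with hV'
  obtain ⟨R', hR'⟩ := h V'
  set B := Module.finBasis ℝ (Wᗮ) with hB
  set R : Finset (E × ℝ) :=
    R'.image (fun p => (((p.1 : E), p.2) : E × ℝ)) ∪
    (Finset.univ.image fun i => (((B i : E), (0:ℝ)) : E × ℝ)) ∪
    (Finset.univ.image fun i => ((-(B i : E), (0:ℝ)) : E × ℝ)) with hRdef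
  have hcoe : Subtype.val '' ((V' : Set W)) = (V : Set E) := by
    apply Set.eq_of_subset_of_subset
    · rintro _ ⟨w, hw, rfl⟩
      rw [hV'] at hw
      simp only [Finset.coe_image, Set.mem_image] at hw
      obtain ⟨v, hv, rfl⟩ := hw
      exact v.2
    · intro v hv
      exact ⟨⟨v, hVW v hv⟩, by
        rw [hV']
        simp only [Finset.coe_image, Set.mem_image]
        exact ⟨⟨v, hv⟩, by simp, rfl⟩, rfl⟩
  have hconv : Subtype.val '' (convexHull ℝ (V' : Set W)) = convexHull ℝ (V : Set E) := by
    rw [← hcoe]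
    have := W.subtype.image_convexHull (V' : Set W)
    simpa using this
  -- orthogonality characterisation
  have hWchar : ∀ x : E, (∀ i, ⟪(B i : E), x⟫ = 0) → x ∈ W := by
    intro x hx
    have horth : ∀ y ∈ Wᗮ, ⟪y, x⟫ = 0 := by
      intro y hy
      have hrepr := B.sum_repr ⟨y, hy⟩
      have : (⟨y, hy⟩ : Wᗮ) = ∑ i, B.repr ⟨y, hy⟩ i • B i := hrepr.symm
      have hyval : y = ∑ i, B.repr ⟨y, hy⟩ i • (B i : E) := by
        have := congrArg (Subtype.val) this
        refine this.trans ?_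
        rw [Submodule.coe_sum]
        rfl
      rw [hyval, sum_inner]
      simp only [real_inner_smul_left]
      simp [hx]
    have : x ∈ Wᗮᗮ := by
      rw [Submodule.mem_orthogonal]
      intro u hu
      exact horth u hu
    rwa [Submodule.orthogonal_orthogonal] at this
  have hWchar' : ∀ x : E, x ∈ W → ∀ i, ⟪(B i : E), x⟫ = 0 := by
    intro x hx i
    have := (B i).2
    rw [Submodule.mem_orthogonal] at this
    rw [real_inner_comm]
    exact this x hx
  refine ⟨R, ?_⟩
  apply Set.eq_of_subset_of_subset
  · intro x hx
    rw [← hconv] at hx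
    obtain ⟨xw, hxw, rfl⟩ := hx
    have hxP : xw ∈ poly R' := by rw [← hR']; exact hxw
    intro p hp
    rw [hRdef] at hp
    simp only [Finset.mem_union, Finset.mem_image, Finset.mem_univ, true_and] at hp
    rcases hp with (⟨q, hq, rfl⟩ | ⟨i, rfl⟩) | ⟨i, rfl⟩
    · have := hxP q hq
      rwa [Submodule.coe_inner] at this
    · simp only
      rw [hWchar' xw.1 xw.2 i]
    · simp only [inner_neg_left]
      rw [hWchar' xw.1 xw.2 i]
      simp
  · intro x hx
    have hxW : x ∈ W := by
      apply hWchar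
      intro i
      have h1 := hx ((B i : E), (0:ℝ)) (by
        rw [hRdef]
        apply Finset.mem_union_left
        apply Finset.mem_union_right
        exact Finset.mem_image.2 ⟨i, Finset.mem_univ i, rfl⟩)
      have h2 := hx (-(B i : E), (0:ℝ)) (by
        rw [hRdef]
        apply Finset.mem_union_right
        exact Finset.mem_image.2 ⟨i, Finset.mem_univ i, rfl⟩)
      simp only [inner_neg_left] at h1 h2
      linarith
    have hxP : (⟨x, hxW⟩ : W) ∈ poly R' := by
      intro q hq
      have := hx ((q.1 : E), q.2) (by
        rw [hRdef]
        apply Finset.mem_union_left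
        apply Finset.mem_union_left
        exact Finset.mem_image.2 ⟨q, hq, rfl⟩)
      rwa [Submodule.coe_inner]
    rw [← hR'] at hxP
    rw [← hconv]
    exact ⟨⟨x, hxW⟩, hxP, rfl⟩

theorem rep_of_finrank_le : ∀ (N : ℕ) {F : Type u_1} [NormedAddCommGroup F]
    [InnerProductSpace ℝ F] [FiniteDimensional ℝ F], Module.finrank ℝ F ≤ N →
    ∀ V : Finset F, ∃ R : Finset (F × ℝ), convexHull ℝ (V : Set F) = poly R := by
  intro N
  induction N with
  | zero =>
    intro F _ _ _ hF V
    haveI : Subsingleton F := by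
      rw [← Module.finrank_zero_iff (R := ℝ)]
      omega
    rcases V.eq_empty_or_nonempty with rfl | ⟨v, hv⟩
    · exact rep_of_empty
    · refine ⟨∅, ?_⟩
      apply Set.eq_of_subset_of_subset
      · intro x _ p hp
        exact absurd hp (Finset.notMem_empty p)
      · intro x _
        have : x = v := Subsingleton.elim x v
        rw [this]
        exact subset_convexHull ℝ _ hv
  | succ N IH =>
    intro F _ _ _ hF V
    classical
    rcases V.eq_empty_or_nonempty with rfl | ⟨v₀, hv₀⟩
    · exact rep_of_empty
    by_cases hint : (interior (convexHull ℝ (V : Set F))).Nonempty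
    · obtain ⟨c, hc⟩ := hint
      apply rep_translate c
      apply rep_of_zero_interior
      rw [hull_image_sub]
      have hmap : (fun v : F => v - c) = ((Homeomorph.addRight (-c) : F ≃ₜ F) : F → F) := by
        funext v
        simp [sub_eq_add_neg]
      rw [hmap, ← Homeomorph.image_interior]
      exact ⟨c, hc, by simp⟩
    · have haff : affineSpan ℝ (V : Set F) ≠ ⊤ := by
        intro htop
        apply hint
        rw [(convex_convexHull ℝ (V : Set F)).interior_nonempty_iff_affineSpan_eq_top]
        rw [affineSpan_convexHull]
        exact htop
      set W : Submodule ℝ F := vectorSpan ℝ (V : Set F) with hW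
      have hWne : W ≠ ⊤ := by
        intro htop
        apply haff
        exact (AffineSubspace.affineSpan_eq_top_iff_vectorSpan_eq_top_of_nonempty ℝ F F
          (s := (V : Set F)) ⟨v₀, Finset.mem_coe.2 hv₀⟩).mpr htop
      have hdim : Module.finrank ℝ W ≤ N := by
        have h1 : Module.finrank ℝ W < Module.finrank ℝ F :=
          Submodule.finrank_lt hWne
        omega
      apply rep_translate v₀
      apply rep_subspace W
      · intro v hv
        rw [Finset.mem_image] at hv
        obtain ⟨u, hu, rfl⟩ := hv
        have := vsub_mem_vectorSpan ℝ (Finset.mem_coe.2 hu) (Finset.mem_coe.2 hv₀)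
        rwa [vsub_eq_sub] at this
      · exact IH hdim

lemma exists_rep_of_hull (V : Finset E) :
    ∃ R : Finset (E × ℝ), convexHull ℝ (V : Set E) = poly R :=
  rep_of_finrank_le (Module.finrank ℝ E) le_rfl V

end FD
end IEval

section EuclFacts

open IEval

variable {n : ℕ}

abbrev EuclT (n : ℕ) : Type := EuclideanSpace ℝ (Fin n)

def IsPolytopeT (P : Set (EuclT n)) : Prop :=
  ∃ S : Finset (EuclT n), S.Nonempty ∧ P = convexHull ℝ (S : Set (EuclT n))

def IsPolytopeOT (P : Set (EuclT n)) : Prop :=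
  IsPolytopeT P ∧ (0 : EuclT n) ∈ P

lemma IsPolytopeOT.compact {P : Set (EuclT n)} (h : IsPolytopeOT P) : IsCompact P := by
  obtain ⟨⟨S, _, rfl⟩, _⟩ := h
  exact (S.finite_toSet.isCompact_convexHull ℝ)

lemma IsPolytopeOT.closed {P : Set (EuclT n)} (h : IsPolytopeOT P) : IsClosed P :=
  h.compact.isClosed

lemma IsPolytopeOT.convex {P : Set (EuclT n)} (h : IsPolytopeOT P) : Convex ℝ P := by
  obtain ⟨⟨S, _, rfl⟩, _⟩ := h
  exact convex_convexHull ℝ _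

lemma IsPolytopeOT.zero_mem {P : Set (EuclT n)} (h : IsPolytopeOT P) : (0 : EuclT n) ∈ P := h.2

lemma IsPolytopeOT.exists_rep {P : Set (EuclT n)} (h : IsPolytopeOT P) :
    ∃ R : Finset (EuclT n × ℝ), P = poly R := by
  obtain ⟨⟨S, _, rfl⟩, _⟩ := h
  obtain ⟨R, hR⟩ := exists_rep_of_hull S
  exact ⟨R, hR⟩

lemma polytopeOT_of_rep {R : Finset (EuclT n × ℝ)} (hc : IsCompact (poly R))
    (h0 : (0 : EuclT n) ∈ poly R) : IsPolytopeOT (poly R) := by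
  obtain ⟨V, hVne, hVeq⟩ := poly_eq_convexHull hc ⟨0, h0⟩
  exact ⟨⟨V, hVne, hVeq⟩, h0⟩

lemma IsPolytopeOT.inter {P Q : Set (EuclT n)} (hP : IsPolytopeOT P) (hQ : IsPolytopeOT Q) :
    IsPolytopeOT (P ∩ Q) := by
  classical
  obtain ⟨R1, h1⟩ := hP.exists_rep
  obtain ⟨R2, h2⟩ := hQ.exists_rep
  have : P ∩ Q = poly (R1 ∪ R2) := by rw [poly_union, h1, h2]
  rw [this]
  apply polytopeOT_of_rep
  · apply IsCompact.of_isClosed_subset hP.compact (isClosed_poly _)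
    rw [← this]
    exact Set.inter_subset_left
  · rw [← this]
    exact ⟨hP.zero_mem, hQ.zero_mem⟩

lemma nonneg_of_rep {R : Finset (EuclT n × ℝ)} (h0 : (0 : EuclT n) ∈ poly R) :
    ∀ p ∈ R, 0 ≤ p.2 := by
  intro p hp
  have := h0 p hp
  simpa using this

end EuclFacts

section Valuation

open IEval

variable {n : ℕ} {ι : Type} [Fintype ι] [DecidableEq ι]

/-- Sign-constancy of a linear functional on a set. -/
def SgnConst (U : Set (EuclT n)) (w : EuclT n) : Prop :=
  (∀ x ∈ U, 0 ≤ ⟪w, x⟫) ∨ (∀ x ∈ U, ⟪w, x⟫ ≤ 0)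

lemma SgnConst.mono {U U' : Set (EuclT n)} {w : EuclT n} (h : SgnConst U w) (hsub : U' ⊆ U) :
    SgnConst U' w := by
  rcases h with h | h
  · exact Or.inl fun x hx => h x (hsub hx)
  · exact Or.inr fun x hx => h x (hsub hx)

lemma SgnConst_smul_of_nonneg {U : Set (EuclT n)} {v : EuclT n} (c : ℝ)
    (h : ∀ x ∈ U, 0 ≤ ⟪v, x⟫) : SgnConst U (c • v) := by
  rcases le_or_gt 0 c with hc | hc
  · exact Or.inl fun x hx => by
      rw [real_inner_smul_left]; exact mul_nonneg hc (h x hx)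
  · exact Or.inr fun x hx => by
      rw [real_inner_smul_left]; exact mul_nonpos_of_nonpos_of_nonneg hc.le (h x hx)

lemma SgnConst_smul_of_nonpos {U : Set (EuclT n)} {v : EuclT n} (c : ℝ)
    (h : ∀ x ∈ U, ⟪v, x⟫ ≤ 0) : SgnConst U (c • v) := by
  rcases le_or_gt 0 c with hc | hc
  · exact Or.inr fun x hx => by
      rw [real_inner_smul_left]; exact mul_nonpos_of_nonneg_of_nonpos hc (h x hx)
  · exact Or.inl fun x hx => by
      rw [real_inner_smul_left]; nlinarith [h x hx]

/-- The relevant directions of a family of H-representations. -/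
def InH (s : Finset ι) (R : ι → Finset (EuclT n × ℝ)) (w : EuclT n) : Prop :=
  (∃ i ∈ s, ∃ p ∈ R i, w = p.1) ∨
  (∃ i ∈ s, ∃ j ∈ s, ∃ p ∈ R i, ∃ q ∈ R j, w = q.2 • p.1 - p.2 • q.1)

/-- If a member of the family is flat against a hyperplane through `0` supporting the
(convex) union, then it is redundant. -/
lemma flat_redundant {s : Finset ι} {R : ι → Finset (EuclT n × ℝ)}
    (hcl : ∀ k ∈ s, IsClosed (poly (R k)))
    (hUconv : Convex ℝ (⋃ k ∈ s, poly (R k)))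
    {k : ι} (hk : k ∈ s) {a : EuclT n}
    (ha : ∀ z ∈ poly (R k), ⟪a, z⟫ ≤ 0)
    {y : EuclT n} (hyU : y ∈ ⋃ l ∈ s, poly (R l)) (hya : 0 < ⟪a, y⟫)
    (hsc : SgnConst (⋃ l ∈ s, poly (R l)) a) :
    poly (R k) ⊆ ⋃ l ∈ s.erase k, poly (R l) := by
  have hpos : ∀ x ∈ ⋃ l ∈ s, poly (R l), 0 ≤ ⟪a, x⟫ := by
    rcases hsc with h | h
    · exact h
    · exact absurd (h y hyU) (not_le.2 hya)
  intro z hz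
  have hzU : z ∈ ⋃ l ∈ s, poly (R l) := Set.mem_biUnion hk hz
  have hza : ⟪a, z⟫ = 0 := le_antisymm (ha z hz) (hpos z hzU)
  set C : Set (EuclT n) := ⋃ l ∈ s.erase k, poly (R l) with hC
  have hCclosed : IsClosed C := by
    apply Set.Finite.isClosed_biUnion (s.erase k).finite_toSet
    intro l hl
    exact hcl l (Finset.mem_of_mem_erase (Finset.mem_coe.1 hl))
  set w : ℝ → EuclT n := fun t => z + t • (y - z) with hw
  have hwU : ∀ t ∈ Set.Ioo (0:ℝ) 1, w t ∈ ⋃ l ∈ s, poly (R l) := by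
    intro t ht
    have := hUconv hzU hyU (by linarith [ht.2.le] : (0:ℝ) ≤ 1 - t) ht.1.le (by ring)
    convert this using 1
    rw [hw]
    simp only
    module
  have hwC : ∀ t ∈ Set.Ioo (0:ℝ) 1, w t ∈ C := by
    intro t ht
    have hU := hwU t ht
    rw [Set.mem_iUnion₂] at hU
    obtain ⟨l, hl, hwl⟩ := hU
    have hlk : l ≠ k := by
      intro rfl'
      subst rfl'
      have := ha _ hwl
      rw [hw] at this
      simp only [inner_add_right, real_inner_smul_right, inner_sub_right, hza] at this
      nlinarith [ht.1]
    exact Set.mem_biUnion (Finset.mem_erase.2 ⟨hlk, hl⟩) hwl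
  have htend : Filter.Tendsto w (nhdsWithin 0 (Set.Ioi (0:ℝ))) (nhds z) := by
    have hcont : Continuous w := by
      rw [hw]
      exact continuous_const.add (continuous_id.smul continuous_const)
    have : Filter.Tendsto w (nhds 0) (nhds (w 0)) := hcont.tendsto 0
    rw [show w 0 = z by simp [hw]] at this
    exact this.mono_left nhdsWithin_le_nhds
  refine hCclosed.mem_of_tendsto htend ?_
  filter_upwards [Ioo_mem_nhdsGT_of_mem (Set.mem_Ico.2 ⟨le_refl (0:ℝ), zero_lt_one⟩)]
    with t ht using hwC t ht

end Valuation

section Valuation2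

open IEval

variable {n : ℕ} {ι : Type} [Fintype ι] [DecidableEq ι]

lemma exists_redundant {s : Finset ι} {R : ι → Finset (EuclT n × ℝ)}
    (hcl : ∀ k ∈ s, IsClosed (poly (R k)))
    (h0 : ∀ k ∈ s, (0 : EuclT n) ∈ poly (R k))
    (hUconv : Convex ℝ (⋃ k ∈ s, poly (R k)))
    (hSC : ∀ w, InH s R w → SgnConst (⋃ k ∈ s, poly (R k)) w)
    {i j : ι} (hi : i ∈ s) (hj : j ∈ s) (hij : i ≠ j) :
    ∃ k ∈ s, poly (R k) ⊆ ⋃ l ∈ s.erase k, poly (R l) := by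
  by_cases hPji : poly (R j) ⊆ poly (R i)
  · exact ⟨j, hj, fun x hx => Set.mem_biUnion (Finset.mem_erase.2 ⟨hij, hi⟩) (hPji hx)⟩
  obtain ⟨y, hyj, hyi⟩ := Set.not_subset.1 hPji
  have hyU : y ∈ ⋃ l ∈ s, poly (R l) := Set.mem_biUnion hj hyj
  by_cases hbigi : ∃ p ∈ R i, p.2 < ⟪p.1, y⟫ ∧ 0 < p.2
  · -- `P i` has a positive violated constraint at `y`
    obtain ⟨p, hp, hpy, hpb⟩ := hbigi
    by_cases hPij : poly (R i) ⊆ poly (R j)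
    · exact ⟨i, hi, fun x hx => Set.mem_biUnion (Finset.mem_erase.2 ⟨hij.symm, hj⟩) (hPij hx)⟩
    obtain ⟨x, hxi, hxj⟩ := Set.not_subset.1 hPij
    have hxU : x ∈ ⋃ l ∈ s, poly (R l) := Set.mem_biUnion hi hxi
    by_cases hbigj : ∃ q ∈ R j, q.2 < ⟪q.1, x⟫ ∧ 0 < q.2
    · -- both positive: contradiction with sign-constancy of the combination
      obtain ⟨q, hq, hqx, hqb⟩ := hbigj
      exfalso
      have hsc := hSC (q.2 • p.1 - p.2 • q.1)
        (Or.inr ⟨i, hi, j, hj, p, hp, q, hq, rfl⟩)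
      have hx' : ⟪q.2 • p.1 - p.2 • q.1, x⟫ < 0 := by
        rw [inner_sub_left, real_inner_smul_left, real_inner_smul_left]
        have h1 : ⟪p.1, x⟫ ≤ p.2 := hxi p hp
        nlinarith
      have hy' : 0 < ⟪q.2 • p.1 - p.2 • q.1, y⟫ := by
        rw [inner_sub_left, real_inner_smul_left, real_inner_smul_left]
        have h1 : ⟪q.1, y⟫ ≤ q.2 := hyj q hq
        nlinarith
      rcases hsc with h | h
      · exact absurd (h x hxU) (not_le.2 hx')
      · exact absurd (h y hyU) (not_le.2 hy')
    · -- all violated constraints of `P j` at `x` have zero rhs: `P j` is flat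
      push_neg at hbigj
      obtain ⟨q, hq, hqx⟩ : ∃ q ∈ R j, q.2 < ⟪q.1, x⟫ := by
        by_contra h
        push_neg at h
        exact hxj fun q hq => h q hq
      have hq0 : q.2 = 0 :=
        le_antisymm (by by_contra h; exact absurd (hbigj q hq hqx) (not_le.2 (lt_of_not_ge h)))
          (nonneg_of_rep (h0 j hj) q hq)
      refine ⟨j, hj, flat_redundant (a := q.1) hcl hUconv hj ?_ hxU ?_ ?_⟩
      · intro z hz
        have := hz q hq
        rwa [hq0] at this
      · rw [← hq0]; exact hqx
      · exact hSC q.1 (Or.inl ⟨j, hj, q, hq, rfl⟩)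
  · -- all violated constraints of `P i` at `y` have zero rhs: `P i` is flat
    push_neg at hbigi
    obtain ⟨p, hp, hpy⟩ : ∃ p ∈ R i, p.2 < ⟪p.1, y⟫ := by
      by_contra h
      push_neg at h
      exact hyi fun p hp => h p hp
    have hp0 : p.2 = 0 :=
      le_antisymm (by by_contra h; exact absurd (hbigi p hp hpy) (not_le.2 (lt_of_not_ge h)))
        (nonneg_of_rep (h0 i hi) p hp)
    refine ⟨i, hi, flat_redundant (a := p.1) hcl hUconv hi ?_ hyU ?_ ?_⟩
    · intro z hz
      have := hz p hp
      rwa [hp0] at this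
    · rw [← hp0]; exact hpy
    · exact hSC p.1 (Or.inl ⟨i, hi, p, hp, rfl⟩)

end Valuation2

section Valuation3

open IEval

variable {n : ℕ} {ι : Type} [Fintype ι] [DecidableEq ι]
variable {A : Type*} [AddCommGroup A]

/-- The inclusion-exclusion statement for the family `P` restricted to `s`. -/
def IEF (Φ : Set (EuclT n) → A) (s : Finset ι) (P : ι → Set (EuclT n)) : Prop :=
  Φ (⋃ i ∈ s, P i) =
    ∑ S ∈ s.powerset.filter (fun S : Finset ι => S.Nonempty),
      (-1 : ℤ) ^ (S.card - 1) • Φ (⋂ i ∈ S, P i)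

lemma biInter_insert_of_nonempty {P : ι → Set (EuclT n)} {k : ι} {T : Finset ι}
    (hT : T.Nonempty) (hk : k ∉ T) :
    (⋂ i ∈ insert k T, P i) = ⋂ l ∈ T, (P k ∩ P l) := by
  obtain ⟨l₀, hl₀⟩ := hT
  ext x
  simp only [Set.mem_iInter, Finset.mem_insert, Set.mem_inter_iff]
  constructor
  · intro h l hl
    exact ⟨h k (Or.inl rfl), h l (Or.inr hl)⟩
  · rintro h i (rfl | hi)
    · exact (h l₀ hl₀).1
    · exact (h i hi).2

lemma IEF_of_redundant (Φ : Set (EuclT n) → A) {s : Finset ι} (P : ι → Set (EuclT n))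
    {k : ι} (hk : k ∈ s) (hred : P k ⊆ ⋃ l ∈ s.erase k, P l)
    (hPk : IsPolytopeOT (P k))
    (hPOl : ∀ l ∈ s.erase k, IsPolytopeOT (P k ∩ P l))
    (hU : IsPolytopeOT (⋃ i ∈ s, P i))
    (IH : ∀ P' : ι → Set (EuclT n), (∀ i ∈ s.erase k, IsPolytopeOT (P' i)) →
      IsPolytopeOT (⋃ i ∈ s.erase k, P' i) → IEF Φ (s.erase k) P')
    (hP : ∀ i ∈ s, IsPolytopeOT (P i)) :
    IEF Φ s P := by
  have hUeq : (⋃ i ∈ s.erase k, P i) = ⋃ i ∈ s, P i := by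
    apply Set.eq_of_subset_of_subset
    · intro x hx
      rw [Set.mem_iUnion₂] at hx ⊢
      obtain ⟨l, hl, hxl⟩ := hx
      exact ⟨l, Finset.mem_of_mem_erase hl, hxl⟩
    · intro x hx
      rw [Set.mem_iUnion₂] at hx
      obtain ⟨l, hl, hxl⟩ := hx
      by_cases hlk : l = k
      · subst hlk
        exact hred hxl
      · exact Set.mem_biUnion (Finset.mem_erase.2 ⟨hlk, hl⟩) hxl
  have E1 : IEF Φ (s.erase k) P :=
    IH P (fun i hi => hP i (Finset.mem_of_mem_erase hi)) (by rw [hUeq]; exact hU)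
  have hPkU : (⋃ l ∈ s.erase k, (P k ∩ P l)) = P k := by
    apply Set.eq_of_subset_of_subset
    · intro x hx
      rw [Set.mem_iUnion₂] at hx
      obtain ⟨l, _, hxl⟩ := hx
      exact hxl.1
    · intro x hx
      have := hred hx
      rw [Set.mem_iUnion₂] at this ⊢
      obtain ⟨l, hl, hxl⟩ := this
      exact ⟨l, hl, hx, hxl⟩
  have E2 : IEF Φ (s.erase k) (fun l => P k ∩ P l) :=
    IH _ hPOl (by rw [hPkU]; exact hPk)
  unfold IEF at E1 E2 ⊢
  rw [← hUeq, E1]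
  -- split the sum according to membership of `k`
  rw [← Finset.sum_filter_add_sum_filter_not
    (s.powerset.filter (fun S : Finset ι => S.Nonempty)) (fun S => k ∈ S)]
  have hnotk : (s.powerset.filter (fun S : Finset ι => S.Nonempty)).filter (fun S => ¬ k ∈ S)
      = (s.erase k).powerset.filter (fun S : Finset ι => S.Nonempty) := by
    ext S
    simp only [Finset.mem_filter, Finset.mem_powerset, Finset.subset_erase]
    tauto
  have hwithk : ((s.powerset.filter (fun S : Finset ι => S.Nonempty)).filter (fun S => k ∈ S)).sum
      (fun S => (-1 : ℤ) ^ (S.card - 1) • Φ (⋂ i ∈ S, P i))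
      = ∑ T ∈ (s.erase k).powerset, (-1 : ℤ) ^ T.card • Φ (⋂ i ∈ insert k T, P i) := by
    refine Finset.sum_bij' (fun S _ => S.erase k) (fun T _ => insert k T)
      ?_ ?_ ?_ ?_ ?_
    case refine_1 =>
      intro S hS
      simp only [Finset.mem_filter, Finset.mem_powerset] at hS
      rw [Finset.mem_powerset]
      exact Finset.erase_subset_erase k hS.1.1
    case refine_2 =>
      intro T hT
      rw [Finset.mem_powerset] at hT
      simp only [Finset.mem_filter, Finset.mem_powerset]
      refine ⟨⟨?_, ⟨k, Finset.mem_insert_self k T⟩⟩, Finset.mem_insert_self k T⟩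
      intro x hx
      rcases Finset.mem_insert.1 hx with rfl | hx
      · exact hk
      · exact Finset.mem_of_mem_erase (hT hx)
    case refine_3 =>
      intro S hS
      simp only [Finset.mem_filter] at hS
      exact Finset.insert_erase hS.2
    case refine_4 =>
      intro T hT
      rw [Finset.mem_powerset] at hT
      apply Finset.erase_insert
      intro hkT
      exact absurd (hT hkT) (Finset.notMem_erase k s)
    case refine_5 =>
      intro S hS
      simp only [Finset.mem_filter] at hS
      have hcard : S.card = (S.erase k).card + 1 := by
        rw [Finset.card_erase_of_mem hS.2]
        have : 1 ≤ S.card := Finset.card_pos.2 ⟨k, hS.2⟩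
        omega
      rw [Finset.insert_erase hS.2, hcard]
      simp
  rw [hnotk, hwithk]
  have hsplit : ∑ T ∈ (s.erase k).powerset, (-1 : ℤ) ^ T.card • Φ (⋂ i ∈ insert k T, P i)
      = (∑ T ∈ (s.erase k).powerset.filter (fun T : Finset ι => T.Nonempty),
          (-1 : ℤ) ^ T.card • Φ (⋂ i ∈ insert k T, P i))
        + Φ (P k) := by
    rw [← Finset.sum_filter_add_sum_filter_not ((s.erase k).powerset)
      (fun T : Finset ι => T.Nonempty)]
    congr 1
    have : ((s.erase k).powerset).filter (fun T : Finset ι => ¬ T.Nonempty) = {∅} := by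
      ext T
      simp only [Finset.mem_filter, Finset.mem_powerset, Finset.not_nonempty_iff_eq_empty,
        Finset.mem_singleton]
      constructor
      · rintro ⟨_, rfl⟩; rfl
      · rintro rfl; exact ⟨Finset.empty_subset _, rfl⟩
    rw [this, Finset.sum_singleton]
    simp
  rw [hsplit]
  have hterm : ∀ T ∈ (s.erase k).powerset.filter (fun T : Finset ι => T.Nonempty),
      (-1 : ℤ) ^ T.card • Φ (⋂ i ∈ insert k T, P i)
      = -((-1 : ℤ) ^ (T.card - 1) • Φ (⋂ l ∈ T, (P k ∩ P l))) := by
    intro T hT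
    simp only [Finset.mem_filter, Finset.mem_powerset] at hT
    have hkT : k ∉ T := fun h => absurd (hT.1 h) (Finset.notMem_erase k s)
    rw [biInter_insert_of_nonempty hT.2 hkT]
    have hc : T.card = (T.card - 1) + 1 := by
      have : 1 ≤ T.card := Finset.card_pos.2 hT.2
      omega
    rw [hc, pow_succ]
    simp [neg_smul]
  rw [Finset.sum_congr rfl hterm, Finset.sum_neg_distrib, ← E2, hPkU]
  abel

end Valuation3

section Valuation4

open IEval

variable {n : ℕ} {ι : Type} [Fintype ι] [DecidableEq ι]
variable {A : Type*} [AddCommGroup A]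

local instance : DecidableEq (EuclT n × ℝ) := Classical.decEq _

lemma zero_mem_poly_of {T : Finset (EuclT n × ℝ)} (hT : ∀ p ∈ T, p.2 = 0) :
    (0 : EuclT n) ∈ poly T := by
  intro p hp
  rw [inner_zero_right, hT p hp]

lemma IsPolytopeOT.inter_poly {X : Set (EuclT n)} (h : IsPolytopeOT X)
    {T : Finset (EuclT n × ℝ)} (h0T : (0 : EuclT n) ∈ poly T) :
    IsPolytopeOT (X ∩ poly T) := by
  classical
  obtain ⟨RX, hRX⟩ := h.exists_rep
  have heq : X ∩ poly T = poly (RX ∪ T) := by rw [poly_union, hRX]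
  rw [heq]
  apply polytopeOT_of_rep
  · apply IsCompact.of_isClosed_subset h.compact (isClosed_poly _)
    rw [← heq]; exact Set.inter_subset_left
  · rw [← heq]; exact ⟨h.zero_mem, h0T⟩

lemma mem_poly_single {u : EuclT n} {x : EuclT n} :
    x ∈ poly ({(u, (0:ℝ))} : Finset (EuclT n × ℝ)) ↔ ⟪u, x⟫ ≤ 0 := by
  simp [mem_poly]

lemma biInter_poly {s : Finset ι} (R : ι → Finset (EuclT n × ℝ)) {S : Finset ι}
    (hS : S.Nonempty) (hsub : S ⊆ s) (hR : ∀ i ∈ s, IsPolytopeOT (poly (R i))) :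
    IsPolytopeOT (⋂ i ∈ S, poly (R i)) := by
  classical
  obtain ⟨i₀, hi₀⟩ := hS
  have heq : (⋂ i ∈ S, poly (R i)) = poly (S.biUnion R) := by
    ext x
    simp only [Set.mem_iInter, mem_poly, Finset.mem_biUnion]
    constructor
    · rintro h p ⟨i, hi, hp⟩
      exact h i hi p hp
    · intro h i hi p hp
      exact h p ⟨i, hi, hp⟩
  rw [heq]
  apply polytopeOT_of_rep
  · apply IsCompact.of_isClosed_subset (hR i₀ (hsub hi₀)).compact (isClosed_poly _)
    rw [← heq]
    intro x hx
    rw [Set.mem_iInter] at hx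
    have := hx i₀
    rw [Set.mem_iInter] at this
    exact this hi₀
  · rw [← heq]
    rw [Set.mem_iInter₂]
    intro i hi
    exact (hR i (hsub hi)).zero_mem

lemma val_cut (Φ : Set (EuclT n) → A)
    (hval : ∀ K L : Set (EuclT n), IsPolytopeOT K → IsPolytopeOT L → IsPolytopeOT (K ∪ L) →
      Φ (K ∪ L) + Φ (K ∩ L) = Φ K + Φ L)
    (v : EuclT n) {X : Set (EuclT n)} (hX : IsPolytopeOT X) :
    Φ X = Φ (X ∩ poly ({((-v : EuclT n), (0:ℝ))} : Finset (EuclT n × ℝ)))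
        + Φ (X ∩ poly ({(v, (0:ℝ))} : Finset (EuclT n × ℝ)))
        - Φ (X ∩ poly ({(v, (0:ℝ)), ((-v : EuclT n), (0:ℝ))} : Finset (EuclT n × ℝ))) := by
  classical
  set K := X ∩ poly ({((-v : EuclT n), (0:ℝ))} : Finset (EuclT n × ℝ)) with hK
  set L := X ∩ poly ({(v, (0:ℝ))} : Finset (EuclT n × ℝ)) with hL
  have hKL : K ∪ L = X := by
    apply Set.eq_of_subset_of_subset
    · rintro x (hx | hx)
      exacts [hx.1, hx.1]
    · intro x hx
      rcases le_total (⟪v, x⟫ : ℝ) 0 with h | h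
      · exact Or.inr ⟨hx, mem_poly_single.2 h⟩
      · refine Or.inl ⟨hx, mem_poly_single.2 ?_⟩
        rw [inner_neg_left]
        linarith
  have hKiL : K ∩ L = X ∩ poly ({(v, (0:ℝ)), ((-v : EuclT n), (0:ℝ))} : Finset (EuclT n × ℝ)) := by
    have : ({(v, (0:ℝ)), ((-v : EuclT n), (0:ℝ))} : Finset (EuclT n × ℝ))
        = ({((-v : EuclT n), (0:ℝ))} : Finset (EuclT n × ℝ)) ∪ {(v, (0:ℝ))} := by
      ext p
      simp [Finset.mem_insert, Finset.mem_union, Finset.mem_singleton]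
      tauto
    rw [this, poly_union, hK, hL]
    ext x
    simp only [Set.mem_inter_iff]
    tauto
  have h0p : (0 : EuclT n) ∈ poly ({((-v : EuclT n), (0:ℝ))} : Finset (EuclT n × ℝ)) :=
    zero_mem_poly_of (by simp)
  have h0m : (0 : EuclT n) ∈ poly ({(v, (0:ℝ))} : Finset (EuclT n × ℝ)) :=
    zero_mem_poly_of (by simp)
  have hKpoly : IsPolytopeOT K := hX.inter_poly h0p
  have hLpoly : IsPolytopeOT L := hX.inter_poly h0m
  have := hval K L hKpoly hLpoly (by rw [hKL]; exact hX)
  rw [hKL, hKiL] at this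
  exact eq_sub_of_add_eq this

end Valuation4

section Valuation5

open IEval

variable {n : ℕ} {ι : Type} [Fintype ι] [DecidableEq ι]
variable {A : Type*} [AddCommGroup A]

local instance : DecidableEq (EuclT n × ℝ) := Classical.decEq _

lemma InH_union_par {s : Finset ι} {R : ι → Finset (EuclT n × ℝ)} {v : EuclT n}
    {T : Finset (EuclT n × ℝ)} (hT : ∀ p ∈ T, ∃ c : ℝ, p.1 = c • v ∧ p.2 = 0)
    {w : EuclT n} (h : InH s (fun i => R i ∪ T) w) :
    InH s R w ∨ ∃ c : ℝ, w = c • v := by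
  rcases h with ⟨i, hi, p, hp, rfl⟩ | ⟨i, hi, j, hj, p, hp, q, hq, rfl⟩
  · rcases Finset.mem_union.1 hp with hp | hp
    · exact Or.inl (Or.inl ⟨i, hi, p, hp, rfl⟩)
    · obtain ⟨c, hc, -⟩ := hT p hp
      exact Or.inr ⟨c, hc⟩
  · rcases Finset.mem_union.1 hp with hp | hp <;> rcases Finset.mem_union.1 hq with hq | hq
    · exact Or.inl (Or.inr ⟨i, hi, j, hj, p, hp, q, hq, rfl⟩)
    · obtain ⟨c, hc1, hc2⟩ := hT q hq
      refine Or.inr ⟨-(p.2 * c), ?_⟩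
      rw [hc1, hc2]
      simp [smul_smul]
    · obtain ⟨c, hc1, hc2⟩ := hT p hp
      refine Or.inr ⟨q.2 * c, ?_⟩
      rw [hc1, hc2]
      simp [smul_smul]
    · obtain ⟨c, hc1, hc2⟩ := hT p hp
      obtain ⟨c', hc1', hc2'⟩ := hT q hq
      refine Or.inr ⟨0, ?_⟩
      rw [hc2, hc2']
      simp

lemma biUnion_inter_eq {s : Finset ι} (P : ι → Set (EuclT n)) (C : Set (EuclT n)) :
    (⋃ i ∈ s, (P i ∩ C)) = (⋃ i ∈ s, P i) ∩ C := by
  ext x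
  simp only [Set.mem_iUnion₂, Set.mem_inter_iff]
  tauto

lemma biInter_inter_eq {S : Finset ι} (hS : S.Nonempty) (P : ι → Set (EuclT n))
    (C : Set (EuclT n)) :
    (⋂ i ∈ S, (P i ∩ C)) = (⋂ i ∈ S, P i) ∩ C := by
  obtain ⟨i₀, hi₀⟩ := hS
  ext x
  simp only [Set.mem_iInter, Set.mem_inter_iff]
  constructor
  · intro h
    exact ⟨fun i hi => (h i hi).1, (h i₀ hi₀).2⟩
  · rintro ⟨h1, h2⟩ i hi
    exact ⟨h1 i hi, h2⟩

lemma rec_key (Φ : Set (EuclT n) → A)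
    (hval : ∀ K L : Set (EuclT n), IsPolytopeOT K → IsPolytopeOT L → IsPolytopeOT (K ∪ L) →
      Φ (K ∪ L) + Φ (K ∩ L) = Φ K + Φ L)
    {s : Finset ι} (hs2 : 2 ≤ s.card)
    (CASEIH : ∀ P' : ι → Set (EuclT n), ∀ k ∈ s, (∀ i ∈ s.erase k, IsPolytopeOT (P' i)) →
      IsPolytopeOT (⋃ i ∈ s.erase k, P' i) → IEF Φ (s.erase k) P') :
    ∀ (L : List (EuclT n)) (R : ι → Finset (EuclT n × ℝ)),
      (∀ i ∈ s, IsPolytopeOT (poly (R i))) →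
      IsPolytopeOT (⋃ i ∈ s, poly (R i)) →
      (∀ w, InH s R w → SgnConst (⋃ i ∈ s, poly (R i)) w ∨ ∃ v ∈ L, ∃ c : ℝ, w = c • v) →
      IEF Φ s (fun i => poly (R i)) := by
  intro L
  induction L with
  | nil =>
    intro R hR hU hinv
    have hSC : ∀ w, InH s R w → SgnConst (⋃ i ∈ s, poly (R i)) w := by
      intro w hw
      rcases hinv w hw with h | ⟨v, hv, _⟩
      · exact h
      · exact absurd hv (List.not_mem_nil (a := v))
    obtain ⟨i, hi, j, hj, hij⟩ := Finset.one_lt_card.1 hs2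
    obtain ⟨k, hk, hred⟩ := exists_redundant (fun k hk => (hR k hk).closed)
      (fun k hk => (hR k hk).zero_mem) hU.convex hSC hi hj hij
    exact IEF_of_redundant Φ _ hk hred (hR k hk)
      (fun l hl => (hR k hk).inter (hR l (Finset.mem_of_mem_erase hl))) hU
      (fun P' h1 h2 => CASEIH P' k hk h1 h2) hR
  | cons v L' ih =>
    intro R hR hU hinv
    set U := ⋃ i ∈ s, poly (R i) with hUdef
    set Tp : Finset (EuclT n × ℝ) := {((-v : EuclT n), (0:ℝ))} with hTp
    set Tm : Finset (EuclT n × ℝ) := {(v, (0:ℝ))} with hTm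
    set T0 : Finset (EuclT n × ℝ) := {(v, (0:ℝ)), ((-v : EuclT n), (0:ℝ))} with hT0
    have hTpz : ∀ p ∈ Tp, ∃ c : ℝ, p.1 = c • v ∧ p.2 = 0 := by
      intro p hp
      rw [hTp, Finset.mem_singleton] at hp
      exact ⟨-1, by rw [hp]; simp, by rw [hp]⟩
    have hTmz : ∀ p ∈ Tm, ∃ c : ℝ, p.1 = c • v ∧ p.2 = 0 := by
      intro p hp
      rw [hTm, Finset.mem_singleton] at hp
      exact ⟨1, by rw [hp]; simp, by rw [hp]⟩
    have hT0z : ∀ p ∈ T0, ∃ c : ℝ, p.1 = c • v ∧ p.2 = 0 := by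
      intro p hp
      rw [hT0, Finset.mem_insert, Finset.mem_singleton] at hp
      rcases hp with rfl | rfl
      · exact ⟨1, by simp, rfl⟩
      · exact ⟨-1, by simp, rfl⟩
    have h0Tp : (0 : EuclT n) ∈ poly Tp := zero_mem_poly_of (fun p hp => by obtain ⟨c, -, h⟩ := hTpz p hp; exact h)
    have h0Tm : (0 : EuclT n) ∈ poly Tm := zero_mem_poly_of (fun p hp => by obtain ⟨c, -, h⟩ := hTmz p hp; exact h)
    have h0T0 : (0 : EuclT n) ∈ poly T0 := zero_mem_poly_of (fun p hp => by obtain ⟨c, -, h⟩ := hT0z p hp; exact h)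
    -- sign information on the cut pieces
    have hsgnp : ∀ x ∈ poly Tp, 0 ≤ ⟪v, x⟫ := by
      intro x hx
      have := hx ((-v : EuclT n), (0:ℝ)) (by rw [hTp]; exact Finset.mem_singleton_self _)
      simp only [inner_neg_left] at this
      linarith
    have hsgnm : ∀ x ∈ poly Tm, ⟪v, x⟫ ≤ 0 := by
      intro x hx
      have := hx (v, (0:ℝ)) (by rw [hTm]; exact Finset.mem_singleton_self _)
      simpa using this
    have hsgn0 : ∀ x ∈ poly T0, ⟪v, x⟫ ≤ 0 := by
      intro x hx
      have := hx (v, (0:ℝ)) (by rw [hT0]; exact Finset.mem_insert_self _ _)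
      simpa using this
    -- the three cut families
    have main : ∀ T : Finset (EuclT n × ℝ), (∀ p ∈ T, ∃ c : ℝ, p.1 = c • v ∧ p.2 = 0) →
        ((0 : EuclT n) ∈ poly T) →
        ((∀ x ∈ poly T, 0 ≤ ⟪v, x⟫) ∨ (∀ x ∈ poly T, ⟪v, x⟫ ≤ 0)) →
        IEF Φ s (fun i => poly (R i ∪ T)) := by
      intro T hTz h0T hsgn
      have hpolyi : ∀ i, poly (R i ∪ T) = poly (R i) ∩ poly T := fun i => poly_union _ _
      have hUT : (⋃ i ∈ s, poly (R i ∪ T)) = U ∩ poly T := by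
        rw [hUdef, ← biUnion_inter_eq]
        apply Set.iUnion₂_congr
        intro i hi
        exact hpolyi i
      apply ih
      · intro i hi
        rw [hpolyi i]
        exact (hR i hi).inter_poly h0T
      · rw [hUT]
        exact hU.inter_poly h0T
      · intro w hw
        rcases InH_union_par hTz hw with hold | ⟨c, rfl⟩
        · rcases hinv w hold with hsc | ⟨v', hv', hc⟩
          · left
            rw [hUT]
            exact hsc.mono Set.inter_subset_left
          · rcases List.mem_cons.1 hv' with rfl | hv'
            · obtain ⟨c, rfl⟩ := hc
              left
              rw [hUT]
              rcases hsgn with h | h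
              · exact SgnConst_smul_of_nonneg c (fun x hx => h x hx.2)
              · exact SgnConst_smul_of_nonpos c (fun x hx => h x hx.2)
            · exact Or.inr ⟨v', hv', hc⟩
        · left
          rw [hUT]
          rcases hsgn with h | h
          · exact SgnConst_smul_of_nonneg c (fun x hx => h x hx.2)
          · exact SgnConst_smul_of_nonpos c (fun x hx => h x hx.2)
    have Ep := main Tp hTpz h0Tp (Or.inl hsgnp)
    have Em := main Tm hTmz h0Tm (Or.inr hsgnm)
    have E0 := main T0 hT0z h0T0 (Or.inr hsgn0)
    -- combine
    unfold IEF at Ep Em E0 ⊢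
    have hUTp : (⋃ i ∈ s, poly (R i ∪ Tp)) = U ∩ poly Tp := by
      rw [hUdef, ← biUnion_inter_eq]
      exact Set.iUnion₂_congr (fun i hi => poly_union _ _)
    have hUTm : (⋃ i ∈ s, poly (R i ∪ Tm)) = U ∩ poly Tm := by
      rw [hUdef, ← biUnion_inter_eq]
      exact Set.iUnion₂_congr (fun i hi => poly_union _ _)
    have hUT0 : (⋃ i ∈ s, poly (R i ∪ T0)) = U ∩ poly T0 := by
      rw [hUdef, ← biUnion_inter_eq]
      exact Set.iUnion₂_congr (fun i hi => poly_union _ _)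
    rw [hUTp] at Ep
    rw [hUTm] at Em
    rw [hUT0] at E0
    have hcutU := val_cut Φ hval v hU
    rw [← hTp, ← hTm, ← hT0] at hcutU
    rw [hcutU, Ep, Em, E0]
    rw [← Finset.sum_add_distrib, ← Finset.sum_sub_distrib]
    apply Finset.sum_congr rfl
    intro S hS
    simp only [Finset.mem_filter, Finset.mem_powerset] at hS
    have hQS : IsPolytopeOT (⋂ i ∈ S, poly (R i)) := biInter_poly R hS.2 hS.1 hR
    have hcutQ := val_cut Φ hval v hQS
    rw [← hTp, ← hTm, ← hT0] at hcutQ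
    have hQp : (⋂ i ∈ S, poly (R i ∪ Tp)) = (⋂ i ∈ S, poly (R i)) ∩ poly Tp := by
      rw [← biInter_inter_eq hS.2]
      exact Set.iInter₂_congr (fun i hi => poly_union _ _)
    have hQm : (⋂ i ∈ S, poly (R i ∪ Tm)) = (⋂ i ∈ S, poly (R i)) ∩ poly Tm := by
      rw [← biInter_inter_eq hS.2]
      exact Set.iInter₂_congr (fun i hi => poly_union _ _)
    have hQ0 : (⋂ i ∈ S, poly (R i ∪ T0)) = (⋂ i ∈ S, poly (R i)) ∩ poly T0 := by
      rw [← biInter_inter_eq hS.2]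
      exact Set.iInter₂_congr (fun i hi => poly_union _ _)
    rw [hQp, hQm, hQ0, hcutQ]
    rw [smul_sub, smul_add]

end Valuation5

section Valuation6

open IEval

variable {n : ℕ} {ι : Type} [Fintype ι] [DecidableEq ι]
variable {A : Type*} [AddCommGroup A]

local instance : DecidableEq (EuclT n × ℝ) := Classical.decEq _
local instance : DecidableEq (EuclT n) := Classical.decEq _

theorem main_aux (Φ : Set (EuclT n) → A)
    (hval : ∀ K L : Set (EuclT n), IsPolytopeOT K → IsPolytopeOT L → IsPolytopeOT (K ∪ L) →
      Φ (K ∪ L) + Φ (K ∩ L) = Φ K + Φ L) :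
    ∀ (N : ℕ) (s : Finset ι) (P : ι → Set (EuclT n)), s.card ≤ N →
      (∀ i ∈ s, IsPolytopeOT (P i)) → IsPolytopeOT (⋃ i ∈ s, P i) → IEF Φ s P := by
  intro N
  induction N with
  | zero =>
    intro s P hcard hP hU
    have hs : s = ∅ := Finset.card_eq_zero.1 (le_antisymm hcard (Nat.zero_le _))
    subst hs
    exfalso
    have := hU.zero_mem
    simp at this
  | succ N IH =>
    intro s P hcard hP hU
    by_cases hle : s.card ≤ N
    · exact IH s P hle hP hU
    have hcard' : s.card = N + 1 := le_antisymm hcard (not_le.1 hle)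
    by_cases h1 : s.card = 1
    · obtain ⟨k, rfl⟩ := Finset.card_eq_one.1 h1
      unfold IEF
      have hUeq : (⋃ i ∈ ({k} : Finset ι), P i) = P k := by simp
      have hfilter : (({k} : Finset ι).powerset.filter (fun S : Finset ι => S.Nonempty))
          = {({k} : Finset ι)} := by
        ext S
        simp only [Finset.mem_filter, Finset.mem_powerset, Finset.subset_singleton_iff,
          Finset.mem_singleton]
        constructor
        · rintro ⟨rfl | rfl, hne⟩
          · exact absurd rfl hne.ne_empty
          · rfl
        · rintro rfl
          exact ⟨Or.inr rfl, ⟨k, Finset.mem_singleton_self k⟩⟩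
      rw [hUeq, hfilter, Finset.sum_singleton]
      simp
    · have hs2 : 2 ≤ s.card := by omega
      -- choose representations
      have hPrep : ∀ i, i ∈ s → ∃ R : Finset (EuclT n × ℝ), P i = poly R :=
        fun i hi => (hP i hi).exists_rep
      set R : ι → Finset (EuclT n × ℝ) :=
        fun i => if h : i ∈ s then Classical.choose (hPrep i h) else ∅ with hRdef
      have hRspec : ∀ i ∈ s, P i = poly (R i) := by
        intro i hi
        rw [hRdef]
        simp only [dif_pos hi]
        exact Classical.choose_spec (hPrep i hi)
      have hUnion : (⋃ i ∈ s, P i) = ⋃ i ∈ s, poly (R i) :=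
        Set.iUnion₂_congr (fun i hi => hRspec i hi)
      -- the list of all relevant directions
      set Hfin : Finset (EuclT n) :=
        (s.biUnion R).image Prod.fst ∪
          ((s.biUnion R) ×ˢ (s.biUnion R)).image
            (fun pq => pq.2.2 • pq.1.1 - pq.1.2 • pq.2.1) with hHfin
      have hkey := rec_key Φ hval hs2
        (fun P' k hk hh1 hh2 => by
          have hcarde : (s.erase k).card ≤ N := by
            rw [Finset.card_erase_of_mem hk]
            omega
          exact IH (s.erase k) P' hcarde hh1 hh2)
        Hfin.toList R
        (fun i hi => by rw [← hRspec i hi]; exact hP i hi)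
        (by rw [← hUnion]; exact hU)
        (by
          intro w hw
          refine Or.inr ⟨w, ?_, 1, (one_smul ℝ w).symm⟩
          rw [Finset.mem_toList, hHfin]
          rcases hw with ⟨i, hi, p, hp, rfl⟩ | ⟨i, hi, j, hj, p, hp, q, hq, rfl⟩
          · exact Finset.mem_union_left _
              (Finset.mem_image.2 ⟨p, Finset.mem_biUnion.2 ⟨i, hi, hp⟩, rfl⟩)
          · exact Finset.mem_union_right _
              (Finset.mem_image.2 ⟨(p, q),
                Finset.mem_product.2 ⟨Finset.mem_biUnion.2 ⟨i, hi, hp⟩,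
                  Finset.mem_biUnion.2 ⟨j, hj, hq⟩⟩, rfl⟩))
      -- transfer back from `poly ∘ R` to `P`
      unfold IEF at hkey ⊢
      rw [hUnion, hkey]
      apply Finset.sum_congr rfl
      intro S hS
      simp only [Finset.mem_filter, Finset.mem_powerset] at hS
      exact congrArg (fun X => ((-1 : ℤ) ^ (S.card - 1)) • Φ X)
        (Set.iInter₂_congr (fun i hi => (hRspec i (hS.1 hi)).symm))

theorem main_final (Φ : Set (EuclT n) → A)
    (hval : ∀ K L : Set (EuclT n), IsPolytopeOT K → IsPolytopeOT L → IsPolytopeOT (K ∪ L) →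
      Φ (K ∪ L) + Φ (K ∩ L) = Φ K + Φ L)
    (m : ℕ) (P : Fin m → Set (EuclT n)) (hP : ∀ i, IsPolytopeOT (P i))
    (hU : IsPolytopeOT (⋃ i, P i)) :
    Φ (⋃ i, P i) =
      ∑ S ∈ Finset.univ.powerset.filter (fun S : Finset (Fin m) => S.Nonempty),
        (-1 : ℤ) ^ (S.card - 1) • Φ (⋂ i ∈ S, P i) := by
  have hUeq : (⋃ i, P i) = ⋃ i ∈ (Finset.univ : Finset (Fin m)), P i := by simp
  have := main_aux Φ hval (Finset.univ : Finset (Fin m)).card Finset.univ P le_rfl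
    (fun i _ => hP i) (by rw [← hUeq]; exact hU)
  unfold IEF at this
  rw [hUeq]
  exact this

end Valuation6


/-- A valuation on convex polytopes containing the origin with values in
an abelian group (with the convention `Φ ∅ = 0`) satisfies the inclusion-exclusion
principle. -/
theorem statement_4 (n : ℕ) {A : Type*} [AddCommGroup A]
    (Φ : Set (Eucl n) → A) (hempty : Φ ∅ = 0)
    (hval : ∀ K L : Set (Eucl n), IsPolytopeO K → IsPolytopeO L → IsPolytopeO (K ∪ L) →
      Φ (K ∪ L) + Φ (K ∩ L) = Φ K + Φ L)
    (m : ℕ) (P : Fin m → Set (Eucl n)) (hP : ∀ i, IsPolytopeO (P i))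
    (hU : IsPolytopeO (⋃ i, P i)) :
    Φ (⋃ i, P i) =
      ∑ S ∈ Finset.univ.powerset.filter (fun S : Finset (Fin m) => S.Nonempty),
        (-1 : ℤ) ^ (S.card - 1) • Φ (⋂ i ∈ S, P i) := by
  have hval' : ∀ K L : Set (EuclT n), IsPolytopeOT K → IsPolytopeOT L → IsPolytopeOT (K ∪ L) →
      Φ (K ∪ L) + Φ (K ∩ L) = Φ K + Φ L := fun K L h1 h2 h3 => hval K L h1 h2 h3
  exact main_final Φ hval' m P (fun i => hP i) hU
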